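/- If a uniquely k-colorable graph G has exactly (k-1)|V(G)| - k(k-1)/2 edges, then G is edge-critical, i.e., for every edge e of G the graph G - e is not uniquely k-colorable. -/

import Mathlib

open SimpleGraph

/-- `G` is uniquely `k`-colorable: its chromatic number is `k` and all proper
`k`-colorings induce the same partition of the vertex set into color classes. -/
def UniquelyKColorable {V : Type} (G : SimpleGraph V) (k : ℕ) : Prop :=
  G.chromaticNumber = k ∧
    ∀ c₁ c₂ : G.Coloring (Fin k), ∀ u v : V, c₁ u = c₁ v ↔ c₂ u = c₂ v

/-- `G` is an edge-critical uniquely `k`-colorable graph. -/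
def EdgeCritical {V : Type} (G : SimpleGraph V) (k : ℕ) : Prop :=
  UniquelyKColorable G k ∧
    ∀ e ∈ G.edgeSet, ¬ UniquelyKColorable (G.deleteEdges {e}) k

/-- A combinatorial plane embedding of `G`: a family of faces, each with a closed
boundary walk, such that every edge lies on face boundaries exactly twice in total,
and Euler's formula holds. -/
structure PlaneEmbedding {V : Type} [DecidableEq V] (G : SimpleGraph V) where
  Faces : Type
  [facesFintype : Fintype Faces]
  boundary : Faces → Σ v : V, G.Walk v v
  edge_count : ∀ e ∈ G.edgeSet, (∑ f : Faces, ((boundary f).2.edges.count e)) = 2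
  euler : Nat.card V + Nat.card Faces = G.edgeSet.ncard + 1 + Nat.card G.ConnectedComponent

attribute [instance] PlaneEmbedding.facesFintype

/-- The degree of a face: the length of its boundary walk (cut edges counted twice). -/
def PlaneEmbedding.fdeg {V : Type} [DecidableEq V] {G : SimpleGraph V}
    (emb : PlaneEmbedding G) (f : emb.Faces) : ℕ :=
  (emb.boundary f).2.length

def Planar {V : Type} [DecidableEq V] (G : SimpleGraph V) : Prop :=
  Nonempty (PlaneEmbedding G)

/-- Outerplanar: a plane embedding with one face incident with all vertices. -/
def Outerplanar {V : Type} [DecidableEq V] (G : SimpleGraph V) : Prop :=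
  ∃ emb : PlaneEmbedding G, ∃ f : emb.Faces, ∀ v : V, v ∈ (emb.boundary f).2.support

def MaximalOuterplanar {V : Type} [DecidableEq V] (G : SimpleGraph V) : Prop :=
  Outerplanar G ∧ ∀ u v : V, u ≠ v → ¬ G.Adj u v →
    ¬ Outerplanar (G ⊔ SimpleGraph.fromEdgeSet {s(u, v)})

/-- `s` is the edge set of a cycle of `G`. -/
def IsCycleSet {V : Type} (G : SimpleGraph V) (s : Set (Sym2 V)) : Prop :=
  ∃ (v : V) (w : G.Walk v v), w.IsCycle ∧ {e | e ∈ w.edges} = s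

/-- Two cycles (given by their edge sets) are dependent: joined by a chain of cycles
in which consecutive cycles share an edge and all intermediate cycles have 4 vertices. -/
def Dependent {V : Type} (G : SimpleGraph V) (s s' : Set (Sym2 V)) : Prop :=
  ∃ (t : ℕ) (C : Fin (t + 2) → Set (Sym2 V)),
    (∀ i, IsCycleSet G (C i)) ∧ C 0 = s ∧ C (Fin.last (t + 1)) = s' ∧
    (∀ i : Fin (t + 1), (C i.castSucc ∩ C i.succ).Nonempty) ∧
    ∀ i : Fin (t + 2), i ≠ 0 → i ≠ Fin.last (t + 1) → (C i).ncard = 4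

/-- `G` has no separating 3-cycle: deleting the vertices of any triangle leaves a
connected graph. -/
def NoSeparating3Cycle {V : Type} (G : SimpleGraph V) : Prop :=
  ∀ s : Finset V, G.IsNClique 3 s → (G.induce {v : V | v ∉ s}).Connected

/-- `H` is a triangle-subgraph of `G`: the union of a sequence of triangles each of
which (after the first) shares an edge with an earlier one. -/
def IsTriangleSubgraph {V : Type} (G : SimpleGraph V) (H : G.Subgraph) : Prop :=
  ∃ (t : ℕ) (T : Fin (t + 1) → Finset V),
    (∀ i, G.IsNClique 3 (T i)) ∧
    (∀ j : Fin (t + 1), j ≠ 0 →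
      ∃ i : Fin (t + 1), i < j ∧ ((T i : Set V) ∩ (T j : Set V)).ncard = 2) ∧
    H = ⨆ i, (⊤ : G.Subgraph).induce (T i : Set V)

def MaximalTriangleSubgraph {V : Type} (G : SimpleGraph V) (H : G.Subgraph) : Prop :=
  IsTriangleSubgraph G H ∧ ∀ H' : G.Subgraph, IsTriangleSubgraph G H' → ¬ H < H'

/-- The set of edges of `G` with one end in `A` and the other in `B`. -/
def edgesBetween {V : Type} (G : SimpleGraph V) (A B : Set V) : Set (Sym2 V) :=
  {e | ∃ a ∈ A, ∃ b ∈ B, G.Adj a b ∧ e = s(a, b)}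

section AuxProof


variable {V : Type}

lemma conn_del {G : SimpleGraph V} {a b : V}
    (h : G.Connected) (hr : (G.deleteEdges {s(a, b)}).Reachable a b) :
    (G.deleteEdges {s(a, b)}).Connected := by
  rw [connected_iff] at h ⊢
  refine ⟨fun u w => ?_, h.2⟩
  obtain ⟨p⟩ := h.1 u w
  induction p with
  | nil => exact Reachable.refl _
  | @cons u v w huv p ih =>
    refine Reachable.trans ?_ ih
    by_cases he : s(u, v) = s(a, b)
    · rw [Sym2.eq_iff] at he
      rcases he with ⟨rfl, rfl⟩ | ⟨rfl, rfl⟩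
      · exact hr
      · exact hr.symm
    · exact Adj.reachable (by simp [deleteEdges_adj, huv, he])

lemma conn_bound [Fintype V] (G : SimpleGraph V) (h : G.Connected) :
    Fintype.card V ≤ G.edgeSet.ncard + 1 := by
  classical
  suffices H : ∀ n (G : SimpleGraph V), G.edgeSet.ncard = n → G.Connected →
      Fintype.card V ≤ n + 1 from H _ G rfl h
  intro n
  induction n using Nat.strong_induction_on with
  | _ n ih =>
    intro G hn hG
    by_cases hac : G.IsAcyclic
    · have ht : G.IsTree := ⟨hG, hac⟩
      haveI : Fintype G.edgeSet := Set.Finite.fintype (Set.toFinite _)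
      have h1 := ht.card_edgeFinset
      have h2 : G.edgeSet.ncard = G.edgeFinset.card := Set.ncard_eq_toFinset_card' _
      omega
    · have hex : ∃ v, ∃ cw : G.Walk v v, cw.IsCycle := by
        simp only [IsAcyclic, not_forall, not_not] at hac
        exact hac
      obtain ⟨v, cw, hcw⟩ := hex
      have hlen := hcw.three_le_length
      have hne : cw.edges ≠ [] := by
        intro h0
        have := cw.length_edges
        rw [h0] at this
        simp at this
        omega
      obtain ⟨e, he⟩ := List.exists_mem_of_ne_nil _ hne
      revert he
      refine Sym2.ind ?_ e
      intro a b he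
      have hadj : G.Adj a b := cw.adj_of_mem_edges he
      have hr : (G.deleteEdges {s(a, b)}).Reachable a b :=
        (adj_and_reachable_delete_edges_iff_exists_cycle.mpr ⟨v, cw, hcw, he⟩).2
      have hconn' := conn_del hG hr
      have hmem : s(a, b) ∈ G.edgeSet := hadj
      have hfin : G.edgeSet.Finite := Set.toFinite _
      have hpos : 0 < G.edgeSet.ncard := (Set.ncard_pos hfin).mpr ⟨_, hmem⟩
      have hm : (G.deleteEdges {s(a, b)}).edgeSet.ncard = n - 1 := by
        rw [edgeSet_deleteEdges, Set.ncard_diff_singleton_of_mem hmem, hn]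
      have := ih (n - 1) (by omega) _ hm hconn'
      omega


lemma classes_connected {V : Type} {G : SimpleGraph V} {k : ℕ}
    (hG : UniquelyKColorable G k) (c : G.Coloring (Fin k)) (hsurj : Function.Surjective c)
    {i j : Fin k} (hij : i ≠ j) :
    (G.induce {v : V | c v = i ∨ c v = j}).Connected := by
  classical
  set S : Set V := {v : V | c v = i ∨ c v = j} with hS
  have hne : Nonempty ↥S := by
    obtain ⟨v, hv⟩ := hsurj i
    exact ⟨⟨v, Or.inl hv⟩⟩
  rw [connected_iff]
  refine ⟨?_, hne⟩
  by_contra hpre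
  simp only [Preconnected, not_forall] at hpre
  obtain ⟨x, y, hxy⟩ := hpre
  set R : Set V := {v : V | ∃ h : v ∈ S, (G.induce S).Reachable x ⟨v, h⟩} with hR
  have hxR : (x : V) ∈ R := ⟨x.2, Reachable.refl _⟩
  have hyR : (y : V) ∉ R := by
    rintro ⟨h, hr⟩
    exact hxy hr
  have hstep : ∀ u v : V, G.Adj u v → u ∈ R → v ∈ S → v ∈ R := by
    rintro u v huv ⟨hu, hru⟩ hv
    refine ⟨hv, hru.trans (Adj.reachable ?_)⟩
    show (G.induce S).Adj ⟨u, hu⟩ ⟨v, hv⟩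
    simpa using huv
  set cc : V → Fin k := fun v => if v ∈ R then Equiv.swap i j (c v) else c v with hcc
  have hvalid : ∀ {u v : V}, G.Adj u v → cc u ≠ cc v := by
    intro u v huv
    have hcuv : c u ≠ c v := c.valid huv
    by_cases hu : u ∈ R <;> by_cases hv : v ∈ R
    · simp only [hcc, if_pos hu, if_pos hv]
      exact fun h => hcuv (Equiv.injective _ h)
    · have hvS : v ∉ S := fun hvS => hv (hstep u v huv hu hvS)
      have huS : c u = i ∨ c u = j := hu.1
      simp only [hcc, if_pos hu, if_neg hv]
      intro h
      apply hvS
      rcases huS with h1 | h1 <;> rw [h1] at h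
      · rw [Equiv.swap_apply_left] at h
        exact Or.inr h.symm
      · rw [Equiv.swap_apply_right] at h
        exact Or.inl h.symm
    · have huS : u ∉ S := fun huS => hu (hstep v u huv.symm hv huS)
      have hvS : c v = i ∨ c v = j := hv.1
      simp only [hcc, if_neg hu, if_pos hv]
      intro h
      apply huS
      rcases hvS with h1 | h1 <;> rw [h1] at h
      · rw [Equiv.swap_apply_left] at h
        exact Or.inr h
      · rw [Equiv.swap_apply_right] at h
        exact Or.inl h
    · simpa only [hcc, if_neg hu, if_neg hv] using hcuv
  set c' : G.Coloring (Fin k) := Coloring.mk cc (fun huv => hvalid huv) with hc'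
  have hiter := hG.2 c' c (x : V) (y : V)
  have hcx : c' (x : V) = Equiv.swap i j (c x) := if_pos hxR
  have hcy : c' (y : V) = c y := if_neg hyR
  have hxS : c (x : V) = i ∨ c (x : V) = j := x.2
  have hyS : c (y : V) = i ∨ c (y : V) = j := y.2
  by_cases hxy2 : c (x : V) = c (y : V)
  · have h2 : c' (x : V) = c' (y : V) := hiter.mpr hxy2
    rw [hcx, hcy, ← hxy2] at h2
    rcases hxS with h1 | h1 <;> rw [h1] at h2
    · rw [Equiv.swap_apply_left] at h2
      exact hij h2.symm
    · rw [Equiv.swap_apply_right] at h2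
      exact hij h2
  · have hswap : Equiv.swap i j (c (x : V)) = c (y : V) := by
      rcases hxS with h1 | h1 <;> rcases hyS with h2 | h2 <;> rw [h1, h2]
      · exact absurd (h1.trans h2.symm) hxy2
      · rw [Equiv.swap_apply_left]
      · rw [Equiv.swap_apply_right]
      · exact absurd (h1.trans h2.symm) hxy2
    exact hxy2 (hiter.mp (by rw [hcx, hcy, hswap]))


lemma ukc_edge_lower_bound {V : Type} [Fintype V] (G : SimpleGraph V) (k : ℕ)
    (hG : UniquelyKColorable G k) :
    ((k : ℤ) - 1) * (Fintype.card V : ℤ) - (k : ℤ) * ((k : ℤ) - 1) / 2 ≤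
      (G.edgeSet.ncard : ℤ) := by
  classical
  have hcol : G.Colorable k := chromaticNumber_le_iff_colorable.mp (le_of_eq hG.1)
  obtain ⟨c⟩ := id hcol
  have hsurj : Function.Surjective c :=
    (chromaticNumber_eq_iff_forall_surjective hcol).mp hG.1 c
  set n := Fintype.card V with hn
  set D := (Finset.univ : Finset (Fin k)).offDiag with hD
  set f : Fin k → ℕ := fun i => (Finset.univ.filter (fun v => c v = i)).card with hf
  set N : Fin k × Fin k → ℕ :=
    fun p => (G.edgeFinset.filter (fun e => Sym2.map c e = s(p.1, p.2))).card with hN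
  -- Claim A
  have step : ∀ e ∈ G.edgeFinset,
      (D.filter (fun p => Sym2.map c e = s(p.1, p.2))).card = 2 := by
    intro e
    refine Sym2.ind (fun u v he => ?_) e
    rw [mem_edgeFinset, mem_edgeSet] at he
    have hcuv : c u ≠ c v := c.valid he
    have hset : D.filter (fun p => Sym2.map c s(u, v) = s(p.1, p.2)) =
        {(c u, c v), (c v, c u)} := by
      ext ⟨p1, p2⟩
      simp only [hD, Finset.mem_filter, Finset.mem_offDiag, Finset.mem_univ, true_and,
        Sym2.map_pair_eq, Sym2.eq_iff, Finset.mem_insert, Finset.mem_singleton, Prod.mk.injEq]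
      constructor
      · rintro ⟨hne, (⟨rfl, rfl⟩ | ⟨rfl, rfl⟩)⟩
        · exact Or.inl ⟨rfl, rfl⟩
        · exact Or.inr ⟨rfl, rfl⟩
      · rintro (⟨rfl, rfl⟩ | ⟨rfl, rfl⟩)
        · exact ⟨hcuv, Or.inl ⟨rfl, rfl⟩⟩
        · exact ⟨hcuv.symm, Or.inr ⟨rfl, rfl⟩⟩
    rw [hset, Finset.card_insert_of_notMem (by simp [Prod.ext_iff, hcuv]),
      Finset.card_singleton]
  have hA : ∑ p ∈ D, N p = 2 * G.edgeFinset.card := by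
    calc ∑ p ∈ D, N p
        = ∑ p ∈ D, ∑ e ∈ G.edgeFinset, if Sym2.map c e = s(p.1, p.2) then 1 else 0 := by
          refine Finset.sum_congr rfl fun p _ => ?_
          simp only [hN, Finset.card_filter]
      _ = ∑ e ∈ G.edgeFinset, ∑ p ∈ D, if Sym2.map c e = s(p.1, p.2) then 1 else 0 :=
          Finset.sum_comm
      _ = ∑ e ∈ G.edgeFinset, 2 := by
          refine Finset.sum_congr rfl fun e he => ?_
          rw [← Finset.card_filter]
          exact step e he
      _ = 2 * G.edgeFinset.card := by
          rw [Finset.sum_const, smul_eq_mul, mul_comm]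
  -- Claim B
  have hB : ∀ p ∈ D, f p.1 + f p.2 ≤ N p + 1 := by
    rintro ⟨i, j⟩ hp
    have hij : i ≠ j := (Finset.mem_offDiag.mp hp).2.2
    set S : Set V := {v : V | c v = i ∨ c v = j} with hS
    have hconn := classes_connected hG c hsurj hij
    haveI : Fintype ↥S := Set.Finite.fintype (Set.toFinite _)
    have hbound := conn_bound (G.induce S) hconn
    -- card of S
    have hcardS : Fintype.card ↥S = f i + f j := by
      have h1 : Fintype.card ↥S = S.ncard := by
        rw [← Nat.card_coe_set_eq, Nat.card_eq_fintype_card]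
      have h2 : S.toFinset =
          (Finset.univ.filter (fun v => c v = i)) ∪ (Finset.univ.filter (fun v => c v = j)) := by
        ext v
        simp [hS, Set.mem_toFinset, Finset.mem_filter, Finset.mem_union]
      rw [h1, Set.ncard_eq_toFinset_card', h2, Finset.card_union_of_disjoint]
      simp only [Finset.disjoint_filter]
      intro v _ hvi hvj
      exact hij (hvi ▸ hvj ▸ rfl)
    -- edge injection
    have hedge : (G.induce S).edgeSet.ncard ≤ N (i, j) := by
      have hinj : Function.Injective (Sym2.map (Subtype.val : ↥S → V)) :=
        Sym2.map.injective Subtype.val_injective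
      have hsub : Sym2.map (Subtype.val : ↥S → V) '' (G.induce S).edgeSet ⊆
          ↑(G.edgeFinset.filter (fun e => Sym2.map c e = s(i, j))) := by
        rintro e' ⟨e0, he0, rfl⟩
        revert he0
        refine Sym2.ind (fun a b he0 => ?_) e0
        rw [mem_edgeSet] at he0
        have hadj : G.Adj (a : V) (b : V) := by simpa using he0
        simp only [Finset.coe_filter, Set.mem_setOf_eq, mem_edgeFinset, mem_edgeSet,
          Sym2.map_pair_eq]
        refine ⟨hadj, ?_⟩
        have hab : c (a : V) ≠ c (b : V) := c.valid hadj
        have haS : c (a : V) = i ∨ c (a : V) = j := a.2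
        have hbS : c (b : V) = i ∨ c (b : V) = j := b.2
        rcases haS with h1 | h1 <;> rcases hbS with h2 | h2 <;> rw [h1, h2] <;>
          first
            | exact absurd (h1.trans h2.symm) hab
            | rfl
            | exact Sym2.eq_swap
      calc (G.induce S).edgeSet.ncard
          = (Sym2.map (Subtype.val : ↥S → V) '' (G.induce S).edgeSet).ncard :=
            (Set.ncard_image_of_injective _ hinj).symm
        _ ≤ ((G.edgeFinset.filter (fun e => Sym2.map c e = s(i, j)) : Finset (Sym2 V)) :
              Set (Sym2 V)).ncard :=
            Set.ncard_le_ncard hsub (Finset.finite_toSet _)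
        _ = N (i, j) := by rw [Set.ncard_coe_finset]
    calc f i + f j = Fintype.card ↥S := hcardS.symm
      _ ≤ (G.induce S).edgeSet.ncard + 1 := hbound
      _ ≤ N (i, j) + 1 := by omega
  -- sums
  have hfsum : ∑ i : Fin k, f i = n := by
    have := Finset.card_eq_sum_card_fiberwise
      (f := fun v : V => c v) (s := Finset.univ) (t := Finset.univ)
      (fun v _ => Finset.mem_univ (c v))
    rw [Finset.card_univ] at this
    exact this.symm
  have hprod : ∑ p ∈ Finset.univ ×ˢ (Finset.univ : Finset (Fin k)), (f p.1 + f p.2)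
      = 2 * (k * n) := by
    rw [Finset.sum_product]
    have : ∀ i : Fin k, ∑ j : Fin k, (f i + f j) = k * f i + n := by
      intro i
      rw [Finset.sum_add_distrib, Finset.sum_const, Finset.card_univ, Fintype.card_fin,
        smul_eq_mul, hfsum]
    rw [Finset.sum_congr rfl fun i _ => this i, Finset.sum_add_distrib, Finset.sum_const,
      ← Finset.mul_sum, hfsum, Finset.card_univ, Fintype.card_fin, smul_eq_mul]
    ring
  have hdiag_eq : (Finset.univ : Finset (Fin k)).diag =
      Finset.univ.image (fun a : Fin k => (a, a)) := by
    ext ⟨a, b⟩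
    simp only [Finset.mem_diag, Finset.mem_univ, true_and, Finset.mem_image]
    constructor
    · rintro rfl; exact ⟨a, rfl⟩
    · rintro ⟨x, h⟩
      obtain ⟨h1, h2⟩ := Prod.mk.inj h
      exact h1 ▸ h2
  have hdiag : ∑ p ∈ (Finset.univ : Finset (Fin k)).diag, (f p.1 + f p.2) = 2 * n := by
    rw [hdiag_eq, Finset.sum_image (fun x _ y _ h => (Prod.mk.inj h).1)]
    simp only [← two_mul]
    rw [← Finset.mul_sum, hfsum]
  have hasum : ∑ p ∈ D, (f p.1 + f p.2) + 2 * n = 2 * (k * n) := by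
    rw [← hprod, ← Finset.diag_union_offDiag (Finset.univ : Finset (Fin k)),
      Finset.sum_union (Finset.disjoint_diag_offDiag _), hdiag, hD]
    ring
  have hDcard : D.card + k = k * k := by
    rw [hD, Finset.offDiag_card, Finset.card_univ, Fintype.card_fin]
    have : k ≤ k * k := by nlinarith
    omega
  -- combine
  have hmain : 2 * (k * n) + k ≤ 2 * G.edgeFinset.card + k * k + 2 * n := by
    have hsum_le : ∑ p ∈ D, (f p.1 + f p.2) ≤ ∑ p ∈ D, (N p + 1) := Finset.sum_le_sum hB
    have hsum2 : ∑ p ∈ D, (N p + 1) = 2 * G.edgeFinset.card + D.card := by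
      rw [Finset.sum_add_distrib, Finset.sum_const, smul_eq_mul, mul_one, hA]
    linarith [hasum, hDcard, hsum2, hsum_le]
  have hEcard : G.edgeSet.ncard = G.edgeFinset.card := Set.ncard_eq_toFinset_card' _
  rw [hEcard]
  have hq : 2 * ((k : ℤ) * ((k : ℤ) - 1) / 2) = (k : ℤ) * (k : ℤ) - (k : ℤ) := by
    have heven : Even ((k : ℤ) * ((k : ℤ) - 1)) := by
      have := Int.even_mul_succ_self ((k : ℤ) - 1)
      simpa [sub_add_cancel, mul_comm] using this
    obtain ⟨m, hm⟩ := heven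
    rw [hm]
    have : (m + m) / 2 = m := by omega
    rw [this]; linarith [hm]
  have hmainZ : 2 * ((k : ℤ) * (n : ℤ)) + (k : ℤ) ≤
      2 * (G.edgeFinset.card : ℤ) + (k : ℤ) * (k : ℤ) + 2 * (n : ℤ) := by
    exact_mod_cast hmain
  linarith

end AuxProof

/-- A uniquely `k`-colorable graph with exactly `(k-1)|V| - k(k-1)/2` edges is
edge-critical. -/
theorem stmt_2 {V : Type} [Fintype V] (G : SimpleGraph V) (k : ℕ)
    (hG : UniquelyKColorable G k)
    (hsize : (G.edgeSet.ncard : ℤ) =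
      ((k : ℤ) - 1) * (Fintype.card V : ℤ) - (k : ℤ) * ((k : ℤ) - 1) / 2) :
    EdgeCritical G k := by
  classical
  refine ⟨hG, fun e he hdel => ?_⟩
  have hb := ukc_edge_lower_bound (G.deleteEdges {e}) k hdel
  have hfin : G.edgeSet.Finite := Set.toFinite _
  have hpos : 0 < G.edgeSet.ncard := (Set.ncard_pos hfin).mpr ⟨e, he⟩
  have hm : (G.deleteEdges {e}).edgeSet.ncard = G.edgeSet.ncard - 1 := by
    rw [edgeSet_deleteEdges, Set.ncard_diff_singleton_of_mem he]
  rw [hm] at hb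
  have hcast : ((G.edgeSet.ncard - 1 : ℕ) : ℤ) = (G.edgeSet.ncard : ℤ) - 1 :=
    Nat.cast_sub (by omega)
  rw [hcast] at hb
  linarith [hsize, hb]
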